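/- Let g : ℝ≥0 → ℝ≥0 be differentiable with g'(t) ≤ −c₂ g(t)^{q} whenever g(t) ≥ 1, where c₂ > 0 and q > 1. Then for any g(0), there is t₀ ≤ 1/(c₂(q−1)) such that g(t₀) ≤ 1. -/

import Mathlib

theorem stmt_19 (g : ℝ → ℝ) (c₂ q : ℝ) (hc₂ : 0 < c₂) (hq : 1 < q)
    (hnonneg : ∀ t ≥ 0, 0 ≤ g t) (hdiff : ∀ t ≥ 0, DifferentiableAt ℝ g t)
    (hineq : ∀ t ≥ 0, 1 ≤ g t → deriv g t ≤ -c₂ * g t ^ q) :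
    ∃ t₀, 0 ≤ t₀ ∧ t₀ ≤ 1 / (c₂ * (q - 1)) ∧ g t₀ ≤ 1 := by
  set T : ℝ := 1 / (c₂ * (q - 1)) with hT
  have hden : 0 < c₂ * (q - 1) := mul_pos hc₂ (by linarith)
  have hTpos : 0 < T := by positivity
  by_contra hcon
  push_neg at hcon
  have hgt : ∀ t ∈ Set.Icc (0:ℝ) T, 1 < g t := by
    intro t ht
    exact hcon t ht.1 ht.2
  -- φ t = g t ^ (1 - q) - c₂ (q-1) t
  set φ : ℝ → ℝ := fun t => g t ^ (1 - q) - c₂ * (q - 1) * t with hφ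
  have hderiv : ∀ t ∈ Set.Icc (0:ℝ) T,
      HasDerivAt φ (deriv g t * ((1 - q) * g t ^ (1 - q - 1)) - c₂ * (q - 1)) t := by
    intro t ht
    have hgpos : 0 < g t := lt_trans one_pos (hgt t ht)
    have h1 : HasDerivAt g (deriv g t) t := (hdiff t ht.1).hasDerivAt
    have h2 : HasDerivAt (fun s => g s ^ (1 - q))
        (deriv g t * ((1 - q) * g t ^ (1 - q - 1))) t := by
      have := (Real.hasDerivAt_rpow_const (p := 1 - q) (Or.inl (ne_of_gt hgpos))).comp t h1
      simpa [mul_comm, Function.comp_def] using this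
    simpa [hφ, Pi.sub_def] using h2.sub ((hasDerivAt_id t).const_mul (c₂ * (q - 1)))
  have hderiv_nonneg : ∀ t ∈ Set.Icc (0:ℝ) T,
      0 ≤ deriv g t * ((1 - q) * g t ^ (1 - q - 1)) - c₂ * (q - 1) := by
    intro t ht
    have hgpos : 0 < g t := lt_trans one_pos (hgt t ht)
    have hle : deriv g t ≤ -c₂ * g t ^ q := hineq t ht.1 (le_of_lt (hgt t ht))
    have hpow : (0:ℝ) < g t ^ (1 - q - 1) := Real.rpow_pos_of_pos hgpos _
    have key : deriv g t * (1 - q) ≥ (-c₂ * g t ^ q) * (1 - q) := by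
      apply mul_le_mul_of_nonpos_right hle (by linarith)
    have h3 : (-c₂ * g t ^ q) * (1 - q) * g t ^ (1 - q - 1) = c₂ * (q - 1) := by
      have h0 : g t ^ q * g t ^ (1 - q - 1) = 1 := by
        rw [← Real.rpow_add hgpos]
        norm_num
      calc (-c₂ * g t ^ q) * (1 - q) * g t ^ (1 - q - 1)
          = -c₂ * (1 - q) * (g t ^ q * g t ^ (1 - q - 1)) := by ring
        _ = -c₂ * (1 - q) * 1 := by rw [h0]
        _ = c₂ * (q - 1) := by ring
    have h4 : deriv g t * (1 - q) * g t ^ (1 - q - 1)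
        ≥ (-c₂ * g t ^ q) * (1 - q) * g t ^ (1 - q - 1) :=
      mul_le_mul_of_nonneg_right key (le_of_lt hpow)
    have := h3 ▸ h4
    nlinarith [this]
  have hmono : MonotoneOn φ (Set.Icc 0 T) := by
    apply monotoneOn_of_deriv_nonneg (convex_Icc 0 T)
    · exact fun t ht => ((hderiv t ht).continuousAt).continuousWithinAt
    · intro t ht
      rw [interior_Icc] at ht
      exact ((hderiv t ⟨le_of_lt ht.1, le_of_lt ht.2⟩).differentiableAt).differentiableWithinAt
    · intro t ht
      rw [interior_Icc] at ht
      have ht' : t ∈ Set.Icc (0:ℝ) T := ⟨le_of_lt ht.1, le_of_lt ht.2⟩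
      rw [(hderiv t ht').deriv]
      exact hderiv_nonneg t ht'
  have h0T : φ 0 ≤ φ T := hmono (Set.left_mem_Icc.2 hTpos.le) (Set.right_mem_Icc.2 hTpos.le) hTpos.le
  have hφ0 : 0 < φ 0 := by
    simp only [hφ, mul_zero, sub_zero]
    exact Real.rpow_pos_of_pos (lt_trans one_pos (hgt 0 (Set.left_mem_Icc.2 hTpos.le))) _
  have hφT : φ T < 0 := by
    have hgT : 1 < g T := hgt T (Set.right_mem_Icc.2 hTpos.le)
    have h1 : g T ^ (1 - q) < 1 := Real.rpow_lt_one_of_one_lt_of_neg hgT (by linarith)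
    have h2 : c₂ * (q - 1) * T = 1 := by
      rw [hT]; exact mul_one_div_cancel hden.ne'
    simp only [hφ]
    rw [h2]; linarith
  linarith
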